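/- arXiv:2007.09309 — 5 statements merged into one kernel-verified Lean document; each statement's English description precedes it below -/
import Mathlib

section
/- The unforced Ultradian glucose-insulin model has exactly one equilibrium (I_p, I_i, G, h₁, h₂, h₃) with G ≥ 0, and at this equilibrium G > 0, I_p > 0 and I_i > 0. Moreover, at any equilibrium the relations I_i = c·I_p with c = (E/V_p)/(E/V_i + 1/t_i) and f₁(G) = I_p/t_p + I_i/t_i hold, so that I_p = f₁(G)/(1/t_p + c/t_i), and G is the unique nonnegative root of the strictly increasing function G ↦ f₂(G) + f₃(c·I_p(G))·G − f₄(I_p(G)) − I₀. -/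
/-- Rate of insulin production. -/
noncomputable def f1 (Rm Vg C1 a1 G : ℝ) : ℝ :=
  Rm / (1 + Real.exp (-G / (Vg * C1) + a1))

/-- Insulin-independent glucose utilization. -/
noncomputable def f2 (Ub C2 Vg G : ℝ) : ℝ :=
  Ub * (1 - Real.exp (-G / (C2 * Vg)))

/-- Insulin-dependent glucose utilization factor (with `(κx)^β` a real power). -/
noncomputable def f3 (C3 Vg U0 Um κ β x : ℝ) : ℝ :=
  (1 / (C3 * Vg)) * (U0 + (Um - U0) * (κ * x) ^ β / (1 + (κ * x) ^ β))

/-- Delayed insulin-dependent glucose production. -/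
noncomputable def f4 (Rg α C5 Vp x : ℝ) : ℝ :=
  Rg / (1 + Real.exp (α * (x / (C5 * Vp) - 1)))

/-- The state `(Ip, Ii, G, h1, h2, h3)` is an equilibrium of the unforced
Ultradian glucose-insulin model with delay parameter `td`: all six right-hand
sides of the ODE system vanish. -/
noncomputable def IsEquilibrium
    (Vp Vi Vg E tp ti td Rm a1 C1 C2 C3 C4 C5 Ub U0 Um Rg α β I0
      Ip Ii G h1 h2 h3 : ℝ) : Prop :=
  f1 Rm Vg C1 a1 G - E * (Ip / Vp - Ii / Vi) - Ip / tp = 0 ∧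
  E * (Ip / Vp - Ii / Vi) - Ii / ti = 0 ∧
  f4 Rg α C5 Vp h3 + I0 - f2 Ub C2 Vg G
    - f3 C3 Vg U0 Um ((1 / C4) * (1 / Vi - 1 / (E * ti))) β Ii * G = 0 ∧
  (Ip - h1) / td = 0 ∧ (h1 - h2) / td = 0 ∧ (h2 - h3) / td = 0

/-- The proportionality constant between interstitial and plasma insulin at
equilibrium: `I_i = c · I_p` with `c = (E/V_p)/(E/V_i + 1/t_i)`. -/
noncomputable def cEq (Vp Vi E ti : ℝ) : ℝ := (E / Vp) / (E / Vi + 1 / ti)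

/-- Equilibrium plasma insulin as a function of glucose:
`I_p(G) = f₁(G)/(1/t_p + c/t_i)`. -/
noncomputable def IpEq (Vp Vi E tp ti Rm Vg C1 a1 G : ℝ) : ℝ :=
  f1 Rm Vg C1 a1 G / (1 / tp + cEq Vp Vi E ti / ti)

/-- The scalar equilibrium function
`g(G) = f₂(G) + f₃(c·I_p(G))·G − f₄(I_p(G)) − I₀` whose unique nonnegative
root is the equilibrium glucose level. -/
noncomputable def gEq (Vp Vi Vg E tp ti Rm a1 C1 C2 C3 C4 C5 Ub U0 Um Rg α β I0
    G : ℝ) : ℝ :=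
  f2 Ub C2 Vg G
    + f3 C3 Vg U0 Um ((1 / C4) * (1 / Vi - 1 / (E * ti))) β
        (cEq Vp Vi E ti * IpEq Vp Vi E tp ti Rm Vg C1 a1 G) * G
    - f4 Rg α C5 Vp (IpEq Vp Vi E tp ti Rm Vg C1 a1 G) - I0

section AuxUltradian

private lemma ratio_mono {s t : ℝ} (hs : 0 ≤ s) (hst : s ≤ t) :
    s / (1 + s) ≤ t / (1 + t) := by
  rw [div_le_div_iff₀ (by linarith) (by linarith)]
  nlinarith

lemma f1_pos' {Rm Vg C1 a1 : ℝ} (hRm : 0 < Rm) (G : ℝ) :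
    0 < f1 Rm Vg C1 a1 G := by
  unfold f1; positivity

lemma f1_mono' {Rm Vg C1 a1 : ℝ} (hRm : 0 < Rm) (hVg : 0 < Vg) (hC1 : 0 < C1) :
    Monotone (f1 Rm Vg C1 a1) := by
  intro x y hxy
  unfold f1
  have hd : (0:ℝ) < 1 + Real.exp (-y / (Vg * C1) + a1) := by positivity
  gcongr

lemma f2_strictMono' {Ub C2 Vg : ℝ} (hUb : 0 < Ub) (hC2 : 0 < C2) (hVg : 0 < Vg) :
    StrictMono (f2 Ub C2 Vg) := by
  intro x y hxy
  unfold f2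
  have : -y / (C2 * Vg) < -x / (C2 * Vg) := by
    apply div_lt_div_of_pos_right (by linarith); positivity
  have := Real.exp_lt_exp.mpr this
  nlinarith

lemma f2_nonneg' {Ub C2 Vg : ℝ} (hUb : 0 < Ub) (hC2 : 0 < C2) (hVg : 0 < Vg)
    {G : ℝ} (hG : 0 ≤ G) : 0 ≤ f2 Ub C2 Vg G := by
  unfold f2
  have : -G / (C2 * Vg) ≤ 0 := by
    apply div_nonpos_of_nonpos_of_nonneg (by linarith); positivity
  have := Real.exp_le_one_iff.mpr this
  nlinarith

lemma f4_pos' {Rg α C5 Vp : ℝ} (hRg : 0 < Rg) (x : ℝ) :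
    0 < f4 Rg α C5 Vp x := by
  unfold f4; positivity

lemma f4_lt' {Rg α C5 Vp : ℝ} (hRg : 0 < Rg) (x : ℝ) :
    f4 Rg α C5 Vp x ≤ Rg := by
  unfold f4
  have h := Real.exp_pos (α * (x / (C5 * Vp) - 1))
  rw [div_le_iff₀ (by linarith)]
  nlinarith

lemma f4_anti' {Rg α C5 Vp : ℝ} (hRg : 0 < Rg) (hα : 0 < α) (hC5 : 0 < C5)
    (hVp : 0 < Vp) : Antitone (f4 Rg α C5 Vp) := by
  intro x y hxy
  unfold f4
  have hd : (0:ℝ) < 1 + Real.exp (α * (x / (C5 * Vp) - 1)) := by positivity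
  gcongr

end AuxUltradian
section AuxUltradian2

private lemma kappa_pos' {Vi E ti C4 : ℝ} (hVi : 0 < Vi) (hC4 : 0 < C4)
    (hEti : Vi < E * ti) : 0 < (1 / C4) * (1 / Vi - 1 / (E * ti)) := by
  have h : 1 / (E * ti) < 1 / Vi := one_div_lt_one_div_of_lt hVi hEti
  have h4 : (0:ℝ) < 1 / C4 := by positivity
  nlinarith

private lemma cEq_pos' {Vp Vi E ti : ℝ} (hVp : 0 < Vp) (hVi : 0 < Vi)
    (hE : 0 < E) (hti : 0 < ti) : 0 < cEq Vp Vi E ti := by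
  unfold cEq; positivity

private lemma IpEq_pos' {Vp Vi E tp ti Rm Vg C1 a1 : ℝ} (hVp : 0 < Vp)
    (hVi : 0 < Vi) (hE : 0 < E) (htp : 0 < tp) (hti : 0 < ti) (hRm : 0 < Rm)
    (G : ℝ) : 0 < IpEq Vp Vi E tp ti Rm Vg C1 a1 G := by
  have hc := cEq_pos' hVp hVi hE hti
  have hf := f1_pos' (Vg := Vg) (C1 := C1) (a1 := a1) hRm G
  unfold IpEq; positivity

private lemma IpEq_mono' {Vp Vi E tp ti Rm Vg C1 a1 : ℝ} (hVp : 0 < Vp)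
    (hVi : 0 < Vi) (hE : 0 < E) (htp : 0 < tp) (hti : 0 < ti) (hRm : 0 < Rm)
    (hVg : 0 < Vg) (hC1 : 0 < C1) :
    Monotone (IpEq Vp Vi E tp ti Rm Vg C1 a1) := by
  have hc := cEq_pos' hVp hVi hE hti
  intro x y h
  unfold IpEq
  gcongr
  exact f1_mono' hRm hVg hC1 h

private lemma f3_lb' {C3 Vg U0 Um κ β : ℝ} (hC3 : 0 < C3) (hVg : 0 < Vg)
    (hU0Um : U0 < Um) (hκ : 0 < κ) {x : ℝ} (hx : 0 ≤ x) :
    U0 / (C3 * Vg) ≤ f3 C3 Vg U0 Um κ β x := by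
  unfold f3
  have ht : 0 ≤ (κ * x) ^ β := Real.rpow_nonneg (by positivity) β
  have h2 : 0 ≤ (Um - U0) * (κ * x) ^ β / (1 + (κ * x) ^ β) := by
    apply div_nonneg (by nlinarith) (by linarith)
  have h3 : (0:ℝ) < 1 / (C3 * Vg) := by positivity
  calc U0 / (C3 * Vg) = 1 / (C3 * Vg) * U0 := by ring
  _ ≤ _ := by nlinarith

private lemma f3_mono' {C3 Vg U0 Um κ β : ℝ} (hC3 : 0 < C3) (hVg : 0 < Vg)
    (hU0Um : U0 < Um) (hκ : 0 < κ) (hβ : 0 < β) {x y : ℝ} (hx : 0 ≤ x)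
    (hxy : x ≤ y) : f3 C3 Vg U0 Um κ β x ≤ f3 C3 Vg U0 Um κ β y := by
  unfold f3
  have hts : 0 ≤ (κ * x) ^ β := Real.rpow_nonneg (by positivity) β
  have htm : (κ * x) ^ β ≤ (κ * y) ^ β :=
    Real.rpow_le_rpow (by positivity) (by nlinarith) hβ.le
  have hr := ratio_mono hts htm
  have hkey : (Um - U0) * (κ * x) ^ β / (1 + (κ * x) ^ β)
      ≤ (Um - U0) * (κ * y) ^ β / (1 + (κ * y) ^ β) := by
    rw [mul_div_assoc, mul_div_assoc]
    exact mul_le_mul_of_nonneg_left hr (by linarith)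
  have h3 : (0:ℝ) < 1 / (C3 * Vg) := by positivity
  nlinarith

end AuxUltradian2
section AuxUltradian3

variable {Vp Vi Vg E tp ti Rm a1 C1 C2 C3 C4 C5 Ub U0 Um Rg α β I0 : ℝ}

private lemma gEq_strictMonoOn (hVp : 0 < Vp) (hVi : 0 < Vi) (hVg : 0 < Vg)
    (hE : 0 < E) (htp : 0 < tp) (hti : 0 < ti) (hRm : 0 < Rm)
    (hC1 : 0 < C1) (hC2 : 0 < C2) (hC3 : 0 < C3) (hC4 : 0 < C4)
    (hC5 : 0 < C5) (hUb : 0 < Ub) (hU0 : 0 < U0) (hRg : 0 < Rg)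
    (hα : 0 < α) (hβ : 0 < β) (hU0Um : U0 < Um) (hEti : Vi < E * ti) :
    StrictMonoOn (gEq Vp Vi Vg E tp ti Rm a1 C1 C2 C3 C4 C5 Ub U0 Um Rg α β I0)
      (Set.Ici 0) := by
  have hκ := kappa_pos' (E := E) (ti := ti) hVi hC4 hEti
  have hc := cEq_pos' hVp hVi hE hti
  intro x hx y hy hxy
  simp only [Set.mem_Ici] at hx hy
  have hFx := IpEq_pos' (Vg := Vg) (C1 := C1) (a1 := a1) hVp hVi hE htp hti hRm x
  have hFy := IpEq_pos' (Vg := Vg) (C1 := C1) (a1 := a1) hVp hVi hE htp hti hRm y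
  have hFm : IpEq Vp Vi E tp ti Rm Vg C1 a1 x ≤ IpEq Vp Vi E tp ti Rm Vg C1 a1 y :=
    IpEq_mono' hVp hVi hE htp hti hRm hVg hC1 hxy.le
  have h2 := f2_strictMono' (C2 := C2) (Vg := Vg) hUb hC2 hVg hxy
  have h3lbx : U0 / (C3 * Vg) ≤ f3 C3 Vg U0 Um ((1 / C4) * (1 / Vi - 1 / (E * ti))) β
      (cEq Vp Vi E ti * IpEq Vp Vi E tp ti Rm Vg C1 a1 x) :=
    f3_lb' hC3 hVg hU0Um hκ (by positivity)
  have h3lby : U0 / (C3 * Vg) ≤ f3 C3 Vg U0 Um ((1 / C4) * (1 / Vi - 1 / (E * ti))) β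
      (cEq Vp Vi E ti * IpEq Vp Vi E tp ti Rm Vg C1 a1 y) :=
    f3_lb' hC3 hVg hU0Um hκ (by positivity)
  have h3m : f3 C3 Vg U0 Um ((1 / C4) * (1 / Vi - 1 / (E * ti))) β
        (cEq Vp Vi E ti * IpEq Vp Vi E tp ti Rm Vg C1 a1 x)
      ≤ f3 C3 Vg U0 Um ((1 / C4) * (1 / Vi - 1 / (E * ti))) β
        (cEq Vp Vi E ti * IpEq Vp Vi E tp ti Rm Vg C1 a1 y) :=
    f3_mono' hC3 hVg hU0Um hκ hβ (by positivity)
      (mul_le_mul_of_nonneg_left hFm hc.le)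
  have h4 : f4 Rg α C5 Vp (IpEq Vp Vi E tp ti Rm Vg C1 a1 y)
      ≤ f4 Rg α C5 Vp (IpEq Vp Vi E tp ti Rm Vg C1 a1 x) :=
    f4_anti' hRg hα hC5 hVp hFm
  have hU : (0:ℝ) < U0 / (C3 * Vg) := by positivity
  have hprod : f3 C3 Vg U0 Um ((1 / C4) * (1 / Vi - 1 / (E * ti))) β
        (cEq Vp Vi E ti * IpEq Vp Vi E tp ti Rm Vg C1 a1 x) * x
      ≤ f3 C3 Vg U0 Um ((1 / C4) * (1 / Vi - 1 / (E * ti))) β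
        (cEq Vp Vi E ti * IpEq Vp Vi E tp ti Rm Vg C1 a1 y) * y :=
    mul_le_mul h3m hxy.le hx (by linarith)
  unfold gEq
  linarith

private lemma gEq_continuous (hVp : 0 < Vp) (hVi : 0 < Vi) (hVg : 0 < Vg)
    (hE : 0 < E) (htp : 0 < tp) (hti : 0 < ti) (hRm : 0 < Rm)
    (hC1 : 0 < C1) (hC2 : 0 < C2) (hC3 : 0 < C3) (hC4 : 0 < C4)
    (hC5 : 0 < C5) (hUb : 0 < Ub) (hU0 : 0 < U0) (hRg : 0 < Rg)
    (hα : 0 < α) (hβ : 0 < β) (hU0Um : U0 < Um) (hEti : Vi < E * ti) :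
    Continuous (gEq Vp Vi Vg E tp ti Rm a1 C1 C2 C3 C4 C5 Ub U0 Um Rg α β I0) := by
  have hκ := kappa_pos' (E := E) (ti := ti) hVi hC4 hEti
  have hc := cEq_pos' hVp hVi hE hti
  have hFpos := fun G => IpEq_pos' (Vg := Vg) (C1 := C1) (a1 := a1) hVp hVi hE htp hti hRm G
  have hf1c : Continuous (f1 Rm Vg C1 a1) := by
    unfold f1
    exact continuous_const.div (by fun_prop) (fun x => by positivity)
  have hFpc : Continuous (IpEq Vp Vi E tp ti Rm Vg C1 a1) := by
    unfold IpEq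
    exact hf1c.div_const _
  have hrc : Continuous fun G => ((1 / C4) * (1 / Vi - 1 / (E * ti)) *
      (cEq Vp Vi E ti * IpEq Vp Vi E tp ti Rm Vg C1 a1 G)) ^ β :=
    (continuous_const.mul (continuous_const.mul hFpc)).rpow_const
      (fun x => Or.inr hβ.le)
  have hrnn : ∀ G : ℝ, (0:ℝ) ≤ ((1 / C4) * (1 / Vi - 1 / (E * ti)) *
      (cEq Vp Vi E ti * IpEq Vp Vi E tp ti Rm Vg C1 a1 G)) ^ β := fun G =>
    Real.rpow_nonneg (by have := hFpos G; positivity) β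
  have hf3c : Continuous fun G => f3 C3 Vg U0 Um ((1 / C4) * (1 / Vi - 1 / (E * ti))) β
      (cEq Vp Vi E ti * IpEq Vp Vi E tp ti Rm Vg C1 a1 G) := by
    unfold f3
    exact continuous_const.mul (continuous_const.add
      ((continuous_const.mul hrc).div (continuous_const.add hrc)
        (fun G => by have := hrnn G; positivity)))
  have hf4c : Continuous fun G => f4 Rg α C5 Vp (IpEq Vp Vi E tp ti Rm Vg C1 a1 G) := by
    unfold f4
    refine continuous_const.div ?_ (fun x => by positivity)
    exact continuous_const.add (Real.continuous_exp.comp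
      (continuous_const.mul ((hFpc.div_const _).sub continuous_const)))
  have hf2c : Continuous (f2 Ub C2 Vg) := by
    unfold f2; fun_prop
  unfold gEq
  exact (((hf2c.add (hf3c.mul continuous_id)).sub hf4c).sub continuous_const)

end AuxUltradian3
section AuxUltradian4

variable {Vp Vi Vg E tp ti td Rm a1 C1 C2 C3 C4 C5 Ub U0 Um Rg α β I0 : ℝ}

private lemma gEq_zero_neg (hVp : 0 < Vp) (hVi : 0 < Vi) (hE : 0 < E)
    (htp : 0 < tp) (hti : 0 < ti) (hRm : 0 < Rm) (hRg : 0 < Rg) (hI0 : 0 ≤ I0) :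
    gEq Vp Vi Vg E tp ti Rm a1 C1 C2 C3 C4 C5 Ub U0 Um Rg α β I0 0 < 0 := by
  have h4 := f4_pos' (α := α) (C5 := C5) (Vp := Vp) hRg
    (IpEq Vp Vi E tp ti Rm Vg C1 a1 0)
  have h2 : f2 Ub C2 Vg 0 = 0 := by simp [f2]
  unfold gEq
  rw [h2]
  simp only [mul_zero]
  linarith

private lemma gEq_exists_root (hVp : 0 < Vp) (hVi : 0 < Vi) (hVg : 0 < Vg)
    (hE : 0 < E) (htp : 0 < tp) (hti : 0 < ti) (hRm : 0 < Rm)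
    (hC1 : 0 < C1) (hC2 : 0 < C2) (hC3 : 0 < C3) (hC4 : 0 < C4)
    (hC5 : 0 < C5) (hUb : 0 < Ub) (hU0 : 0 < U0) (hRg : 0 < Rg)
    (hα : 0 < α) (hβ : 0 < β) (hU0Um : U0 < Um) (hEti : Vi < E * ti)
    (hI0 : 0 ≤ I0) :
    ∃ G0 : ℝ, 0 ≤ G0 ∧
      gEq Vp Vi Vg E tp ti Rm a1 C1 C2 C3 C4 C5 Ub U0 Um Rg α β I0 G0 = 0 := by
  have hκ := kappa_pos' (E := E) (ti := ti) hVi hC4 hEti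
  have hc := cEq_pos' hVp hVi hE hti
  have hm : (0:ℝ) < U0 / (C3 * Vg) := by positivity
  obtain ⟨m, hmdef⟩ : ∃ m : ℝ, m = U0 / (C3 * Vg) := ⟨_, rfl⟩
  rw [← hmdef] at hm
  obtain ⟨b, hbdef⟩ : ∃ b : ℝ, b = (Rg + I0) / m + 1 := ⟨_, rfl⟩
  have hb : (0:ℝ) < b := by rw [hbdef]; positivity
  have hgb : 0 < gEq Vp Vi Vg E tp ti Rm a1 C1 C2 C3 C4 C5 Ub U0 Um Rg α β I0 b := by
    have hFb := IpEq_pos' (Vg := Vg) (C1 := C1) (a1 := a1) hVp hVi hE htp hti hRm b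
    have h2 := f2_nonneg' (C2 := C2) (Vg := Vg) hUb hC2 hVg hb.le
    have h3 : m ≤ f3 C3 Vg U0 Um ((1 / C4) * (1 / Vi - 1 / (E * ti))) β
        (cEq Vp Vi E ti * IpEq Vp Vi E tp ti Rm Vg C1 a1 b) := by
      rw [hmdef]; exact f3_lb' hC3 hVg hU0Um hκ (by positivity)
    have h4 := f4_lt' (α := α) (C5 := C5) (Vp := Vp) hRg
      (IpEq Vp Vi E tp ti Rm Vg C1 a1 b)
    have hmb : m * b = Rg + I0 + m := by
      rw [hbdef, mul_add, mul_one, mul_div_cancel₀ _ (ne_of_gt hm)]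
    have hprod : m * b ≤ f3 C3 Vg U0 Um ((1 / C4) * (1 / Vi - 1 / (E * ti))) β
        (cEq Vp Vi E ti * IpEq Vp Vi E tp ti Rm Vg C1 a1 b) * b :=
      mul_le_mul_of_nonneg_right h3 hb.le
    unfold gEq
    linarith
  have hg0 := gEq_zero_neg (Vg := Vg) (a1 := a1) (C1 := C1) (C2 := C2)
    (C3 := C3) (C4 := C4) (C5 := C5) (Ub := Ub) (U0 := U0) (Um := Um)
    (Rg := Rg) (α := α) (β := β) hVp hVi hE htp hti hRm hRg hI0
  have hcont := (gEq_continuous (a1 := a1) (I0 := I0) hVp hVi hVg hE htp hti hRm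
    hC1 hC2 hC3 hC4 hC5 hUb hU0 hRg hα hβ hU0Um hEti).continuousOn
    (s := Set.Icc 0 b)
  have hIVT := intermediate_value_Icc hb.le hcont
  have h0mem : (0:ℝ) ∈ Set.Icc
      (gEq Vp Vi Vg E tp ti Rm a1 C1 C2 C3 C4 C5 Ub U0 Um Rg α β I0 0)
      (gEq Vp Vi Vg E tp ti Rm a1 C1 C2 C3 C4 C5 Ub U0 Um Rg α β I0 b) :=
    ⟨hg0.le, hgb.le⟩
  obtain ⟨G0, hG0mem, hG0⟩ := hIVT h0mem
  exact ⟨G0, hG0mem.1, hG0⟩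

end AuxUltradian4
section AuxUltradian5

variable {Vp Vi Vg E tp ti td Rm a1 C1 C2 C3 C4 C5 Ub U0 Um Rg α β I0 : ℝ}

private lemma equil_char (hVp : 0 < Vp) (hVi : 0 < Vi) (hE : 0 < E)
    (htp : 0 < tp) (hti : 0 < ti) (htd : 0 < td)
    {Ip Ii G h1 h2 h3 : ℝ}
    (heq : IsEquilibrium Vp Vi Vg E tp ti td Rm a1 C1 C2 C3 C4 C5 Ub U0 Um Rg α β I0
      Ip Ii G h1 h2 h3) :
    Ii = cEq Vp Vi E ti * Ip ∧
    f1 Rm Vg C1 a1 G = Ip / tp + Ii / ti ∧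
    Ip = IpEq Vp Vi E tp ti Rm Vg C1 a1 G ∧
    h1 = Ip ∧ h2 = Ip ∧ h3 = Ip ∧
    gEq Vp Vi Vg E tp ti Rm a1 C1 C2 C3 C4 C5 Ub U0 Um Rg α β I0 G = 0 := by
  obtain ⟨e1, e2, e3, e4, e5, e6⟩ := heq
  have htd' : td ≠ 0 := ne_of_gt htd
  rw [div_eq_zero_iff] at e4 e5 e6
  have h1e : h1 = Ip := by
    rcases e4 with h | h
    · linarith
    · exact absurd h htd'
  have h2e : h2 = Ip := by
    rcases e5 with h | h
    · linarith
    · exact absurd h htd'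
  have h3e : h3 = Ip := by
    rcases e6 with h | h
    · linarith
    · exact absurd h htd'
  have hden : (0:ℝ) < E / Vi + 1 / ti := by positivity
  have hIi : Ii = cEq Vp Vi E ti * Ip := by
    rw [cEq, div_mul_eq_mul_div, eq_div_iff (ne_of_gt hden)]
    have hVp' : Vp ≠ 0 := ne_of_gt hVp
    have hVi' : Vi ≠ 0 := ne_of_gt hVi
    have hti' : ti ≠ 0 := ne_of_gt hti
    field_simp at e2 ⊢
    linarith
  have hc := cEq_pos' hVp hVi hE hti
  have hf1 : f1 Rm Vg C1 a1 G = Ip / tp + Ii / ti := by linarith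
  have hD : (0:ℝ) < 1 / tp + cEq Vp Vi E ti / ti := by positivity
  have hIp : Ip = IpEq Vp Vi E tp ti Rm Vg C1 a1 G := by
    rw [IpEq, eq_div_iff (ne_of_gt hD), hf1, hIi]
    ring
  have hg : gEq Vp Vi Vg E tp ti Rm a1 C1 C2 C3 C4 C5 Ub U0 Um Rg α β I0 G = 0 := by
    rw [h3e, hIp] at e3
    rw [hIp] at hIi
    rw [hIi] at e3
    unfold gEq
    linarith
  exact ⟨hIi, hf1, hIp, h1e, h2e, h3e, hg⟩

private lemma equil_of_root (hVp : 0 < Vp) (hVi : 0 < Vi) (hE : 0 < E)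
    (htp : 0 < tp) (hti : 0 < ti) {G : ℝ}
    (hg : gEq Vp Vi Vg E tp ti Rm a1 C1 C2 C3 C4 C5 Ub U0 Um Rg α β I0 G = 0) :
    IsEquilibrium Vp Vi Vg E tp ti td Rm a1 C1 C2 C3 C4 C5 Ub U0 Um Rg α β I0
      (IpEq Vp Vi E tp ti Rm Vg C1 a1 G)
      (cEq Vp Vi E ti * IpEq Vp Vi E tp ti Rm Vg C1 a1 G) G
      (IpEq Vp Vi E tp ti Rm Vg C1 a1 G) (IpEq Vp Vi E tp ti Rm Vg C1 a1 G)
      (IpEq Vp Vi E tp ti Rm Vg C1 a1 G) := by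
  have hden : (0:ℝ) < E / Vi + 1 / ti := by positivity
  have hc := cEq_pos' hVp hVi hE hti
  have hcdef : cEq Vp Vi E ti * (E / Vi + 1 / ti) = E / Vp := by
    rw [cEq]; field_simp
  have hD : (0:ℝ) < 1 / tp + cEq Vp Vi E ti / ti := by positivity
  have hIpD : IpEq Vp Vi E tp ti Rm Vg C1 a1 G * (1 / tp + cEq Vp Vi E ti / ti)
      = f1 Rm Vg C1 a1 G := by
    rw [IpEq, div_mul_cancel₀ _ (ne_of_gt hD)]
  refine ⟨?_, ?_, ?_, by simp, by simp, by simp⟩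
  · linear_combination (-1 : ℝ) * hIpD + IpEq Vp Vi E tp ti Rm Vg C1 a1 G * hcdef
  · linear_combination (-(IpEq Vp Vi E tp ti Rm Vg C1 a1 G)) * hcdef
  · unfold gEq at hg
    linarith

end AuxUltradian5

/-- The unforced Ultradian model has exactly one equilibrium with `G ≥ 0`, at
which `G, I_p, I_i > 0`; at any equilibrium `I_i = c·I_p`,
`f₁(G) = I_p/t_p + I_i/t_i`, and `I_p = f₁(G)/(1/t_p + c/t_i)`; and the
equilibrium glucose is the unique nonnegative root of the strictly increasing
function `g`. -/
theorem ultradian_unique_equilibrium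
    (Vp Vi Vg E tp ti td Rm a1 C1 C2 C3 C4 C5 Ub U0 Um Rg α β I0 : ℝ)
    (hVp : 0 < Vp) (hVi : 0 < Vi) (hVg : 0 < Vg) (hE : 0 < E)
    (htp : 0 < tp) (hti : 0 < ti) (htd : 0 < td) (hRm : 0 < Rm) (ha1 : 0 < a1)
    (hC1 : 0 < C1) (hC2 : 0 < C2) (hC3 : 0 < C3) (hC4 : 0 < C4) (hC5 : 0 < C5)
    (hUb : 0 < Ub) (hU0 : 0 < U0) (hUm : 0 < Um) (hRg : 0 < Rg)
    (hα : 0 < α) (hβ : 0 < β) (hU0Um : U0 < Um) (hEti : Vi < E * ti)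
    (hI0 : 0 ≤ I0) :
    (∃! p : ℝ × ℝ × ℝ × ℝ × ℝ × ℝ,
      0 ≤ p.2.2.1 ∧
        IsEquilibrium Vp Vi Vg E tp ti td Rm a1 C1 C2 C3 C4 C5 Ub U0 Um Rg α β I0
          p.1 p.2.1 p.2.2.1 p.2.2.2.1 p.2.2.2.2.1 p.2.2.2.2.2) ∧
    (∀ Ip Ii G h1 h2 h3 : ℝ, 0 ≤ G →
      IsEquilibrium Vp Vi Vg E tp ti td Rm a1 C1 C2 C3 C4 C5 Ub U0 Um Rg α β I0
        Ip Ii G h1 h2 h3 →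
      0 < G ∧ 0 < Ip ∧ 0 < Ii) ∧
    (∀ Ip Ii G h1 h2 h3 : ℝ,
      IsEquilibrium Vp Vi Vg E tp ti td Rm a1 C1 C2 C3 C4 C5 Ub U0 Um Rg α β I0
        Ip Ii G h1 h2 h3 →
      Ii = cEq Vp Vi E ti * Ip ∧
      f1 Rm Vg C1 a1 G = Ip / tp + Ii / ti ∧
      Ip = IpEq Vp Vi E tp ti Rm Vg C1 a1 G) ∧
    StrictMonoOn (gEq Vp Vi Vg E tp ti Rm a1 C1 C2 C3 C4 C5 Ub U0 Um Rg α β I0)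
      (Set.Ici 0) ∧
    (∀ Ip Ii G h1 h2 h3 : ℝ, 0 ≤ G →
      IsEquilibrium Vp Vi Vg E tp ti td Rm a1 C1 C2 C3 C4 C5 Ub U0 Um Rg α β I0
        Ip Ii G h1 h2 h3 →
      ∀ G' : ℝ, 0 ≤ G' →
        (gEq Vp Vi Vg E tp ti Rm a1 C1 C2 C3 C4 C5 Ub U0 Um Rg α β I0 G' = 0 ↔
          G' = G)) := by
  have hc := cEq_pos' hVp hVi hE hti
  have hmono := gEq_strictMonoOn (a1 := a1) (I0 := I0) hVp hVi hVg hE htp hti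
    hRm hC1 hC2 hC3 hC4 hC5 hUb hU0 hRg hα hβ hU0Um hEti
  obtain ⟨G0, hG0nn, hG0⟩ := gEq_exists_root (a1 := a1) hVp hVi hVg hE htp hti
    hRm hC1 hC2 hC3 hC4 hC5 hUb hU0 hRg hα hβ hU0Um hEti hI0
  have hg0neg := gEq_zero_neg (Vg := Vg) (a1 := a1) (C1 := C1) (C2 := C2)
    (C3 := C3) (C4 := C4) (C5 := C5) (Ub := Ub) (U0 := U0) (Um := Um)
    (Rg := Rg) (α := α) (β := β) hVp hVi hE htp hti hRm hRg hI0
  refine ⟨⟨(IpEq Vp Vi E tp ti Rm Vg C1 a1 G0,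
      cEq Vp Vi E ti * IpEq Vp Vi E tp ti Rm Vg C1 a1 G0, G0,
      IpEq Vp Vi E tp ti Rm Vg C1 a1 G0, IpEq Vp Vi E tp ti Rm Vg C1 a1 G0,
      IpEq Vp Vi E tp ti Rm Vg C1 a1 G0),
      ⟨hG0nn, equil_of_root hVp hVi hE htp hti hG0⟩, ?_⟩, ?_, ?_, hmono, ?_⟩
  · rintro ⟨Ip, Ii, G, h1, h2, h3⟩ ⟨hGnn, heq⟩
    dsimp only at hGnn heq ⊢
    obtain ⟨hIi, hf1, hIp, h1e, h2e, h3e, hg⟩ :=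
      equil_char hVp hVi hE htp hti htd heq
    have hGeq : G = G0 := hmono.injOn (Set.mem_Ici.mpr hGnn)
      (Set.mem_Ici.mpr hG0nn) (by rw [hg, hG0])
    subst hGeq
    subst hIp
    subst hIi
    subst h1e
    subst h2e
    subst h3e
    rfl
  · intro Ip Ii G h1 h2 h3 hGnn heq
    obtain ⟨hIi, hf1, hIp, h1e, h2e, h3e, hg⟩ :=
      equil_char hVp hVi hE htp hti htd heq
    have hIppos : 0 < Ip := by
      rw [hIp]
      exact IpEq_pos' (Vg := Vg) (C1 := C1) (a1 := a1) hVp hVi hE htp hti hRm G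
    have hGpos : 0 < G := by
      rcases hGnn.lt_or_eq with h | h
      · exact h
      · exfalso; rw [← h] at hg; linarith
    exact ⟨hGpos, hIppos, by rw [hIi]; positivity⟩
  · intro Ip Ii G h1 h2 h3 heq
    obtain ⟨hIi, hf1, hIp, _, _, _, _⟩ := equil_char hVp hVi hE htp hti htd heq
    exact ⟨hIi, hf1, hIp⟩
  · intro Ip Ii G h1 h2 h3 hGnn heq G' hG'
    obtain ⟨_, _, _, _, _, _, hg⟩ := equil_char hVp hVi hE htp hti htd heq
    constructor
    · intro hg'
      exact hmono.injOn (Set.mem_Ici.mpr hG') (Set.mem_Ici.mpr hGnn)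
        (by rw [hg, hg'])
    · intro h
      rw [h]
      exact hg
end

section
/- Let λ, τ > 0 with λτ < π/2. Then every complex number γ satisfying the characteristic equation γ + λ e^{−γτ} = 0 has strictly negative real part. -/
/-- If `λ, τ > 0` and `λτ < π/2`, then every complex root `γ` of the characteristic
equation `γ + λ e^{-γτ} = 0` of the delay equation `ż(t) = -λ z(t-τ)` has
strictly negative real part. -/
theorem char_roots_stable (lam tau : ℝ) (hlam : 0 < lam) (htau : 0 < tau)
    (h : lam * tau < Real.pi / 2) :
    ∀ γ : ℂ, γ + (lam : ℂ) * Complex.exp (-(γ * (tau : ℂ))) = 0 → γ.re < 0 := by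
  intro γ hγ
  by_contra hx
  push_neg at hx
  set x := γ.re with hxdef
  set y := γ.im with hydef
  have hγeq : γ = -((lam : ℂ) * Complex.exp (-(γ * (tau : ℂ)))) := by
    linear_combination hγ
  have hwre : (-(γ * (tau : ℂ))).re = -(x * tau) := by simp [hxdef]
  have hwim : (-(γ * (tau : ℂ))).im = -(y * tau) := by simp [hydef]
  have habs : ‖γ‖ = lam * Real.exp (-(x * tau)) := by
    rw [hγeq]
    rw [norm_neg, norm_mul, Complex.norm_exp, hwre, Complex.norm_real, Real.norm_eq_abs,
      abs_of_pos hlam]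
  have hexple : Real.exp (-(x * tau)) ≤ 1 := by
    apply Real.exp_le_one_iff.mpr
    nlinarith
  have hyle : |y| ≤ lam := by
    have := Complex.abs_im_le_norm γ
    rw [habs] at this
    calc |y| ≤ lam * Real.exp (-(x * tau)) := this
    _ ≤ lam * 1 := by nlinarith [Real.exp_pos (-(x*tau))]
    _ = lam := by ring
  have hcos : 0 < Real.cos (-(y * tau)) := by
    apply Real.cos_pos_of_mem_Ioo
    constructor
    · have : |y * tau| < Real.pi / 2 := by
        rw [abs_mul, abs_of_pos htau]
        calc |y| * tau ≤ lam * tau := by nlinarith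
        _ < Real.pi / 2 := h
      have := abs_lt.mp this
      linarith [this.1, this.2]
    · have : |y * tau| < Real.pi / 2 := by
        rw [abs_mul, abs_of_pos htau]
        calc |y| * tau ≤ lam * tau := by nlinarith
        _ < Real.pi / 2 := h
      have := abs_lt.mp this
      linarith [this.1, this.2]
  have hre := congrArg Complex.re hγeq
  rw [Complex.neg_re, Complex.mul_re, Complex.ofReal_re, Complex.ofReal_im,
    Complex.exp_re, Complex.exp_im, hwre, hwim] at hre
  have hxlt : x < 0 := by
    rw [hxdef, hre]
    simp only [zero_mul, sub_zero]
    have := Real.exp_pos (-(x * tau))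
    nlinarith [mul_pos hlam (mul_pos this hcos)]
  linarith
end

section
/- Let λ, τ > 0 with λτ > π/2. Then there exists a complex number γ with strictly positive real part satisfying the characteristic equation γ + λ e^{−γτ} = 0. -/
/-- If `λ, τ > 0` and `λτ > π/2`, then the characteristic equation
`γ + λ e^{-γτ} = 0` of the delay equation `ż(t) = -λ z(t-τ)` has a root with
strictly positive real part. -/
theorem char_root_unstable (lam tau : ℝ) (hlam : 0 < lam) (htau : 0 < tau)
    (h : Real.pi / 2 < lam * tau) :
    ∃ γ : ℂ, 0 < γ.re ∧ γ + (lam : ℂ) * Complex.exp (-(γ * (tau : ℂ))) = 0 := by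
  set ρ : ℝ → ℝ := fun x => lam * Real.exp (-(x * tau)) with hρdef
  have hρpos : ∀ x, 0 < ρ x := fun x => mul_pos hlam (Real.exp_pos _)
  set G : ℝ → ℝ := fun x =>
    tau * Real.sqrt (ρ x ^ 2 - x ^ 2) - Real.arccos (-x / ρ x) with hGdef
  have hρc : Continuous ρ := by
    apply continuous_const.mul
    exact Real.continuous_exp.comp (continuous_id.mul continuous_const).neg
  have hGcont : Continuous G := by
    apply Continuous.sub
    · exact continuous_const.mul ((hρc.pow 2).sub (continuous_id.pow 2)).sqrt
    · exact Real.continuous_arccos.comp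
        (Continuous.div continuous_id.neg hρc fun x => (hρpos x).ne')
  have hG0 : G 0 = tau * lam - Real.pi / 2 := by
    simp [hGdef, hρdef, Real.sqrt_sq hlam.le, Real.arccos_zero]
  have hG0pos : 0 < G 0 := by rw [hG0]; nlinarith
  have hGlam : G lam = -Real.pi := by
    have h1 : ρ lam < lam := by
      have : Real.exp (-(lam * tau)) < 1 := by
        rw [Real.exp_lt_one_iff]; nlinarith
      calc ρ lam = lam * Real.exp (-(lam * tau)) := rfl
        _ < lam * 1 := mul_lt_mul_of_pos_left this hlam
        _ = lam := mul_one lam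
    have h2 : Real.sqrt (ρ lam ^ 2 - lam ^ 2) = 0 := by
      apply Real.sqrt_eq_zero'.2
      nlinarith [hρpos lam]
    have h3 : Real.arccos (-lam / ρ lam) = Real.pi := by
      rw [Real.arccos_eq_pi, div_le_iff₀ (hρpos lam)]
      nlinarith [hρpos lam]
    simp [hGdef, h2, h3]
  have hGlamneg : G lam < 0 := by rw [hGlam]; linarith [Real.pi_pos]
  -- IVT
  have hsub : Set.Icc (G lam) (G 0) ⊆ G '' Set.Icc 0 lam :=
    intermediate_value_Icc' hlam.le hGcont.continuousOn
  obtain ⟨x, hxmem, hGx⟩ := hsub ⟨hGlamneg.le, hG0pos.le⟩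
  obtain ⟨hx0, hxlam⟩ := hxmem
  have hxpos : 0 < x := by
    rcases hx0.lt_or_eq with h' | h'
    · exact h'
    · exfalso; rw [← h'] at hGx; rw [hGx] at hG0pos; exact lt_irrefl 0 hG0pos
  set r : ℝ := ρ x with hrdef
  have hrpos : 0 < r := hρpos x
  -- x ≤ r
  have hxr : x ≤ r := by
    by_contra hc
    push_neg at hc
    have h2 : Real.sqrt (r ^ 2 - x ^ 2) = 0 := by
      apply Real.sqrt_eq_zero'.2; nlinarith
    have h3 : Real.arccos (-x / r) = Real.pi := by
      rw [Real.arccos_eq_pi, div_le_iff₀ hrpos]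
      nlinarith
    have : G x = -Real.pi := by simp [hGdef, ← hrdef, h2, h3]
    rw [hGx] at this
    have := Real.pi_pos
    linarith
  set t : ℝ := -x / r with htdef
  have ht1 : -1 ≤ t := by
    rw [htdef, neg_div, neg_le, neg_neg, div_le_one hrpos]; exact hxr
  have ht0 : t ≤ 1 := by
    have : -x / r ≤ 0 := div_nonpos_of_nonpos_of_nonneg (by linarith) hrpos.le
    rw [htdef]; linarith
  set y : ℝ := Real.sqrt (r ^ 2 - x ^ 2) with hydef
  have hynonneg : 0 ≤ y := Real.sqrt_nonneg _
  have hyt : tau * y = Real.arccos t := by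
    have hGxval : G x = tau * y - Real.arccos t := rfl
    rw [hGx] at hGxval; linarith
  have hcos : Real.cos (tau * y) = t := by rw [hyt]; exact Real.cos_arccos ht1 ht0
  have hsin : Real.sin (tau * y) = Real.sqrt (1 - t ^ 2) := by
    rw [hyt]; exact Real.sin_arccos t
  have hrsin : r * Real.sqrt (1 - t ^ 2) = y := by
    rw [hydef]
    have hsq : r ^ 2 - x ^ 2 = r ^ 2 * (1 - t ^ 2) := by
      have hr2 : r ^ 2 ≠ 0 := by positivity
      rw [htdef, div_pow, neg_sq, mul_sub, mul_one, mul_div_assoc', mul_comm (r ^ 2) (x ^ 2),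
        mul_div_assoc, div_self hr2, mul_one]
    rw [hsq, Real.sqrt_mul (sq_nonneg r), Real.sqrt_sq hrpos.le]
  have hrt : r * t = -x := by
    rw [htdef, mul_comm, div_mul_cancel₀ _ hrpos.ne']
  have hrval : lam * Real.exp (-(x * tau)) = r := rfl
  refine ⟨⟨x, y⟩, hxpos, ?_⟩
  apply Complex.ext
  · simp only [Complex.add_re, Complex.mul_re, Complex.mul_im, Complex.ofReal_re,
      Complex.ofReal_im, Complex.exp_re, Complex.exp_im, Complex.neg_re, Complex.neg_im]
    ring_nf
    rw [Real.cos_neg, hcos, hrval, hrt]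
    simp
  · simp only [Complex.add_im, Complex.mul_im, Complex.mul_re, Complex.ofReal_re,
      Complex.ofReal_im, Complex.exp_re, Complex.exp_im, Complex.neg_re, Complex.neg_im]
    ring_nf
    rw [Real.sin_neg, mul_comm y tau, hsin, hrval]
    simp only [Complex.zero_im]
    linarith [hrsin]
end

section
/- Let λ, τ > 0 and ω > 0. The purely imaginary number γ = iω satisfies the characteristic equation γ + λ e^{−γτ} = 0 if and only if ω = λ and λτ = π/2 + 2kπ for some nonnegative integer k. -/
/-- For `λ, τ, ω > 0`, the purely imaginary number `γ = iω` satisfies the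
characteristic equation `γ + λ e^{-γτ} = 0` if and only if `ω = λ` and
`λτ = π/2 + 2kπ` for some nonnegative integer `k`. -/
theorem char_root_imaginary (lam tau ω : ℝ) (hlam : 0 < lam) (htau : 0 < tau)
    (hω : 0 < ω) :
    (Complex.I * (ω : ℂ) + (lam : ℂ) *
        Complex.exp (-(Complex.I * (ω : ℂ) * (tau : ℂ))) = 0) ↔
      (ω = lam ∧ ∃ k : ℕ, lam * tau = Real.pi / 2 + 2 * (k : ℝ) * Real.pi) := by
  have key : (Complex.I * (ω : ℂ) + (lam : ℂ) *
        Complex.exp (-(Complex.I * (ω : ℂ) * (tau : ℂ))) = 0) ↔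
      (Real.cos (ω*tau) = 0 ∧ ω = lam * Real.sin (ω*tau)) := by
    rw [Complex.ext_iff]
    simp only [Complex.add_re, Complex.add_im, Complex.mul_re, Complex.mul_im,
      Complex.I_re, Complex.I_im, Complex.ofReal_re, Complex.ofReal_im,
      Complex.exp_re, Complex.exp_im, Complex.neg_re, Complex.neg_im,
      Complex.zero_re, Complex.zero_im, Real.exp_zero, Real.cos_neg, Real.sin_neg]
    ring_nf
    simp only [Real.exp_zero, mul_one, one_mul]
    constructor
    · rintro ⟨h1, h2⟩
      refine ⟨?_, by linarith⟩
      have := mul_left_cancel₀ (ne_of_gt hlam) (h1.trans (mul_zero lam).symm)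
      linarith [this]
    · rintro ⟨h1, h2⟩
      constructor
      · rw [h1]; ring
      · linarith
  rw [key]
  constructor
  · rintro ⟨hcos, hsin⟩
    have hs1 : Real.sin (ω * tau) = 1 := by
      have hsq := Real.sin_sq_add_cos_sq (ω * tau)
      rw [hcos] at hsq
      have : Real.sin (ω * tau) = 1 ∨ Real.sin (ω * tau) = -1 := by
        have h0 : (Real.sin (ω*tau) - 1) * (Real.sin (ω*tau) + 1) = 0 := by nlinarith
        rcases mul_eq_zero.mp h0 with h | h
        · exact Or.inl (by linarith)
        · exact Or.inr (by linarith)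
      rcases this with h | h
      · exact h
      · exfalso; rw [h] at hsin; nlinarith
    have hωlam : ω = lam := by rw [hs1] at hsin; linarith
    refine ⟨hωlam, ?_⟩
    obtain ⟨k, hk⟩ := Real.sin_eq_one_iff.mp hs1
    have hkpos : 0 ≤ k := by
      by_contra hneg
      push_neg at hneg
      have : (k : ℝ) ≤ -1 := by exact_mod_cast Int.cast_le.mpr (by omega : k ≤ -1)
      have hpi := Real.pi_pos
      nlinarith [mul_pos hω htau]
    lift k to ℕ using hkpos
    exact ⟨k, by rw [← hωlam]; push_cast at hk ⊢; linarith⟩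
  · rintro ⟨hωlam, k, hk⟩
    subst hωlam
    rw [hk]
    constructor
    · rw [show Real.pi / 2 + 2 * (k:ℝ) * Real.pi = Real.pi/2 + (k:ℝ)*(2*Real.pi) by ring,
        Real.cos_add_nat_mul_two_pi, Real.cos_pi_div_two]
    · rw [show Real.pi / 2 + 2 * (k:ℝ) * Real.pi = Real.pi/2 + (k:ℝ)*(2*Real.pi) by ring,
        Real.sin_add_nat_mul_two_pi, Real.sin_pi_div_two, mul_one]
end

section
/- Let t_d > 0 and let u : [0, ∞) → ℝ be continuous. Suppose h₁, h₂, h₃ : [0, ∞) → ℝ are differentiable, satisfy h₁'(t) = (u(t) − h₁(t))/t_d, h₂'(t) = (h₁(t) − h₂(t))/t_d, h₃'(t) = (h₂(t) − h₃(t))/t_d for all t ≥ 0, and h₁(0) = h₂(0) = h₃(0) = 0. Then for every t ≥ 0, h₃(t) = ∫₀ᵗ (s²/(2 t_d³)) e^{−s/t_d} u(t − s) ds. -/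
open MeasureTheory intervalIntegral

/-- FTC-1 helper for continuous integrands. -/
lemma prim_hasDerivAt {f : ℝ → ℝ} (hf : Continuous f) (b : ℝ) :
    HasDerivAt (fun x => ∫ s in (0:ℝ)..x, f s) (f b) b :=
  intervalIntegral.integral_hasDerivAt_right (hf.intervalIntegrable _ _)
    (hf.stronglyMeasurable.stronglyMeasurableAtFilter) hf.continuousAt

/-- Single-stage integrating factor lemma. -/
lemma stageA (td : ℝ) (htd : 0 < td) (g f : ℝ → ℝ)
    (hg : ContinuousOn g (Set.Ici 0))
    (hd : ∀ t ∈ Set.Ici (0:ℝ), HasDerivWithinAt f ((g t - f t)/td) (Set.Ici 0) t)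
    (hf0 : f 0 = 0) :
    ∀ t, 0 ≤ t → f t * Real.exp (t/td) = ∫ s in (0:ℝ)..t, Real.exp (s/td) * g s / td := by
  intro t ht
  have hfc : ContinuousOn f (Set.Ici 0) := fun s hs => (hd s hs).continuousWithinAt
  set F : ℝ → ℝ := fun s => f s * Real.exp (s/td) with hF
  have key : ∀ s ∈ Set.Ici (0:ℝ),
      HasDerivWithinAt F (Real.exp (s/td) * g s / td) (Set.Ici 0) s := by
    intro s hs
    have he : HasDerivAt (fun x : ℝ => Real.exp (x/td)) (Real.exp (s/td) * (1/td)) s :=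
      ((hasDerivAt_id s).div_const td).exp
    have := (hd s hs).mul he.hasDerivWithinAt
    refine this.congr_deriv ?_
    ring
  have hFc : ContinuousOn F (Set.Icc 0 t) :=
    (hfc.mul ((Real.continuous_exp.comp (continuous_id.div_const td)).continuousOn)).mono
      Set.Icc_subset_Ici_self
  have hderiv : ∀ s ∈ Set.Ioo (0:ℝ) t,
      HasDerivWithinAt F (Real.exp (s/td) * g s / td) (Set.Ioi s) s := by
    intro s hs
    exact ((key s (le_of_lt hs.1)).hasDerivAt (Ici_mem_nhds hs.1)).hasDerivWithinAt
  have hint : IntervalIntegrable (fun s => Real.exp (s/td) * g s / td) volume 0 t := by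
    apply ContinuousOn.intervalIntegrable
    apply ContinuousOn.div_const
    apply ContinuousOn.mul
    · exact (Real.continuous_exp.comp (continuous_id.div_const td)).continuousOn
    · exact hg.mono (by rw [Set.uIcc_of_le ht]; exact Set.Icc_subset_Ici_self)
  have := intervalIntegral.integral_eq_sub_of_hasDeriv_right_of_le ht hFc hderiv hint
  rw [this, hF]
  simp [hf0]

/-- The three-stage linear filter `h₁' = (u - h₁)/t_d`, `h₂' = (h₁ - h₂)/t_d`,
`h₃' = (h₂ - h₃)/t_d` with zero initial conditions, driven by a continuous
input `u`, has output `h₃(t) = ∫₀ᵗ (s²/(2 t_d³)) e^{-s/t_d} u(t-s) ds`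
(convolution with the Erlang kernel). -/
theorem three_stage_filter_erlang (td : ℝ) (htd : 0 < td) (u h1 h2 h3 : ℝ → ℝ)
    (hu : ContinuousOn u (Set.Ici 0))
    (hd1 : ∀ t ∈ Set.Ici (0 : ℝ),
      HasDerivWithinAt h1 ((u t - h1 t) / td) (Set.Ici 0) t)
    (hd2 : ∀ t ∈ Set.Ici (0 : ℝ),
      HasDerivWithinAt h2 ((h1 t - h2 t) / td) (Set.Ici 0) t)
    (hd3 : ∀ t ∈ Set.Ici (0 : ℝ),
      HasDerivWithinAt h3 ((h2 t - h3 t) / td) (Set.Ici 0) t)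
    (h10 : h1 0 = 0) (h20 : h2 0 = 0) (h30 : h3 0 = 0) :
    ∀ t : ℝ, 0 ≤ t →
      h3 t = ∫ s in (0 : ℝ)..t,
        (s ^ 2 / (2 * td ^ 3)) * Real.exp (-s / td) * u (t - s) := by
  intro t ht
  have hc1 : ContinuousOn h1 (Set.Ici 0) := fun s hs => (hd1 s hs).continuousWithinAt
  have hc2 : ContinuousOn h2 (Set.Ici 0) := fun s hs => (hd2 s hs).continuousWithinAt
  set v : ℝ → ℝ := fun s => u (max s 0) with hv
  have hvc : Continuous v := hu.comp_continuous (continuous_id.max continuous_const)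
      (fun x => le_max_right x 0)
  have hvu : ∀ s : ℝ, 0 ≤ s → v s = u s := fun s hs => by simp [hv, max_eq_left hs]
  set w : ℝ → ℝ := fun s => Real.exp (s/td) * v s / td with hw
  have hwc : Continuous w :=
    ((Real.continuous_exp.comp (continuous_id.div_const td)).mul hvc).div_const td
  set W0 : ℝ → ℝ := fun x => ∫ s in (0:ℝ)..x, w s with hW0
  set W1 : ℝ → ℝ := fun x => ∫ s in (0:ℝ)..x, s * w s with hW1
  set W2 : ℝ → ℝ := fun x => ∫ s in (0:ℝ)..x, s^2 * w s with hW2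
  have hw1c : Continuous (fun s => s * w s) := continuous_id.mul hwc
  have hw2c : Continuous (fun s : ℝ => s^2 * w s) := (continuous_pow 2).mul hwc
  have dW0 : ∀ b, HasDerivAt W0 (w b) b := prim_hasDerivAt hwc
  have dW1 : ∀ b, HasDerivAt W1 (b * w b) b := prim_hasDerivAt hw1c
  have dW2 : ∀ b, HasDerivAt W2 (b^2 * w b) b := prim_hasDerivAt hw2c
  have cW0 : Continuous W0 := continuous_iff_continuousAt.mpr fun x => (dW0 x).continuousAt
  have cW1 : Continuous W1 := continuous_iff_continuousAt.mpr fun x => (dW1 x).continuousAt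
  -- Stage 1
  have A1 : ∀ s, 0 ≤ s → h1 s * Real.exp (s/td) = W0 s := by
    intro s hs
    rw [stageA td htd u h1 hu hd1 h10 s hs]
    apply intervalIntegral.integral_congr
    intro r hr
    rw [Set.uIcc_of_le hs] at hr
    simp only [hw, hvu r hr.1]
  -- Stage 2
  have A2 : ∀ s, 0 ≤ s → h2 s * Real.exp (s/td) = (s * W0 s - W1 s) / td := by
    intro s hs
    rw [stageA td htd h1 h2 hc1 hd2 h20 s hs]
    have e1 : (∫ r in (0:ℝ)..s, Real.exp (r/td) * h1 r / td)
        = ∫ r in (0:ℝ)..s, W0 r / td := by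
      apply intervalIntegral.integral_congr
      intro r hr
      rw [Set.uIcc_of_le hs] at hr
      have h := A1 r hr.1
      show Real.exp (r/td) * h1 r / td = W0 r / td
      rw [mul_comm, h]
    rw [e1, intervalIntegral.integral_div]
    have hΦ : ∀ r ∈ Set.uIcc (0:ℝ) s, HasDerivAt (fun x => x * W0 x - W1 x) (W0 r) r := by
      intro r _
      have := ((hasDerivAt_id r).mul (dW0 r)).sub (dW1 r)
      refine this.congr_deriv ?_
      simp only [id_eq]
      ring
    have hInt : IntervalIntegrable W0 volume 0 s := cW0.intervalIntegrable _ _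
    rw [intervalIntegral.integral_eq_sub_of_hasDerivAt hΦ hInt]
    simp [hW0, hW1]
  -- Stage 3
  have A3 : h3 t * Real.exp (t/td) = (t^2/2 * W0 t - t * W1 t + W2 t / 2) / td^2 := by
    rw [stageA td htd h2 h3 hc2 hd3 h30 t ht]
    have e1 : (∫ r in (0:ℝ)..t, Real.exp (r/td) * h2 r / td)
        = ∫ r in (0:ℝ)..t, (r * W0 r - W1 r) / td^2 := by
      apply intervalIntegral.integral_congr
      intro r hr
      rw [Set.uIcc_of_le ht] at hr
      have h := A2 r hr.1
      show Real.exp (r/td) * h2 r / td = (r * W0 r - W1 r) / td^2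
      rw [mul_comm, h]
      ring
    rw [e1, intervalIntegral.integral_div]
    have hΨ : ∀ r ∈ Set.uIcc (0:ℝ) t,
        HasDerivAt (fun x => x^2/2 * W0 x - x * W1 x + W2 x / 2) (r * W0 r - W1 r) r := by
      intro r _
      have d1 : HasDerivAt (fun x : ℝ => x^2/2) r r := by
        simpa using (hasDerivAt_pow 2 r).div_const 2
      have := ((d1.mul (dW0 r)).sub ((hasDerivAt_id r).mul (dW1 r))).add ((dW2 r).div_const 2)
      refine this.congr_deriv ?_
      simp only [id_eq]
      ring
    have hInt : IntervalIntegrable (fun r => r * W0 r - W1 r) volume 0 t :=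
      ((continuous_id.mul cW0).sub cW1).intervalIntegrable _ _
    rw [intervalIntegral.integral_eq_sub_of_hasDerivAt hΨ hInt]
    simp [hW0, hW1, hW2]
  -- Rewrite the target integral
  set K : ℝ → ℝ := fun r => Real.exp (-t/td) / (2 * td^2) * ((t - r)^2 * w r) with hK
  have RHS1 : (∫ s in (0:ℝ)..t, (s ^ 2 / (2 * td ^ 3)) * Real.exp (-s / td) * u (t - s))
      = ∫ r in (0:ℝ)..t, K r := by
    have e0 : (∫ s in (0:ℝ)..t, (s ^ 2 / (2 * td ^ 3)) * Real.exp (-s / td) * u (t - s))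
        = ∫ s in (0:ℝ)..t, K (t - s) := by
      apply intervalIntegral.integral_congr
      intro s hs
      rw [Set.uIcc_of_le ht] at hs
      have hts : (0:ℝ) ≤ t - s := by linarith [hs.2]
      show (s ^ 2 / (2 * td ^ 3)) * Real.exp (-s / td) * u (t - s) = K (t - s)
      rw [← hvu _ hts]
      simp only [hK, hw]
      rw [show Real.exp (-s/td) = Real.exp (-t/td) * Real.exp ((t-s)/td) by
        rw [← Real.exp_add]; ring_nf]
      have h2s : t - (t - s) = s := by ring
      rw [h2s]
      field_simp
    rw [e0, intervalIntegral.integral_comp_sub_left K t]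
    norm_num
  rw [RHS1]
  have e2 : (∫ r in (0:ℝ)..t, K r)
      = Real.exp (-t/td) / (2*td^2) * ∫ r in (0:ℝ)..t, ((t-r)^2 * w r) := by
    simp only [hK]
    rw [intervalIntegral.integral_const_mul]
  have e3 : (∫ r in (0:ℝ)..t, ((t-r)^2 * w r)) = t^2 * W0 t - 2*t*W1 t + W2 t := by
    have e3a : (∫ r in (0:ℝ)..t, ((t-r)^2 * w r))
        = ∫ r in (0:ℝ)..t, (t^2 * w r - 2*t*(r*w r) + r^2 * w r) := by
      apply intervalIntegral.integral_congr
      intro r _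
      ring
    have iA : IntervalIntegrable (fun r : ℝ => t^2 * w r) volume 0 t :=
      (continuous_const.mul hwc).intervalIntegrable _ _
    have iB : IntervalIntegrable (fun r : ℝ => 2*t*(r * w r)) volume 0 t :=
      (continuous_const.mul hw1c).intervalIntegrable _ _
    have iC : IntervalIntegrable (fun r : ℝ => r^2 * w r) volume 0 t :=
      hw2c.intervalIntegrable _ _
    rw [e3a, intervalIntegral.integral_add (iA.sub iB) iC, intervalIntegral.integral_sub iA iB,
      intervalIntegral.integral_const_mul, intervalIntegral.integral_const_mul]
  rw [e2, e3]
  have hE : Real.exp (t/td) ≠ 0 := Real.exp_ne_zero _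
  have hA : h3 t = (t ^ 2 / 2 * W0 t - t * W1 t + W2 t / 2) / td ^ 2 * Real.exp (-t / td) := by
    rw [neg_div, Real.exp_neg, ← A3]
    field_simp
  rw [hA]
  ring
end
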